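/- Let (X, μ) be a measure space, let n ≥ 1, and let f₁, …, fₙ : X → ℝ be bounded measurable functions. Define f : X → ℝ by f(x) = sqrt(f₁(x)² + ⋯ + fₙ(x)²). Then, regarding the ℂ-valued versions of f₁, …, fₙ and f as elements of the ring L^∞(X, μ; ℂ), the ideal of L^∞(X, μ; ℂ) generated by the classes [f₁], …, [fₙ] is equal to the principal ideal generated by the class [f]. -/

import Mathlib

open MeasureTheory
open scoped ENNReal

noncomputable instance AEEqFunComplex.instCommRing
    {α : Type*} [MeasurableSpace α] {μ : Measure α} : CommRing (α →ₘ[μ] ℂ) :=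
  { AEEqFun.instAddCommGroup, AEEqFun.instCommMonoid with
    left_distrib := fun a b c => AEEqFun.toGerm_injective <| by
      simp only [AEEqFun.mul_toGerm, AEEqFun.add_toGerm, mul_add]
    right_distrib := fun a b c => AEEqFun.toGerm_injective <| by
      simp only [AEEqFun.mul_toGerm, AEEqFun.add_toGerm, add_mul]
    zero_mul := fun a => AEEqFun.toGerm_injective <| by
      simp only [AEEqFun.mul_toGerm, AEEqFun.zero_toGerm, zero_mul]
    mul_zero := fun a => AEEqFun.toGerm_injective <| by
      simp only [AEEqFun.mul_toGerm, AEEqFun.zero_toGerm, mul_zero] }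

/-- The ring `L^∞(α, μ; ℂ)` of essentially bounded measurable complex-valued functions
modulo `μ`-a.e. equality, realized as a subring of the ring of a.e. equivalence classes
of functions. -/
noncomputable def Linfty {α : Type*} [MeasurableSpace α] (μ : Measure α) :
    Subring (α →ₘ[μ] ℂ) where
  carrier := {f : α →ₘ[μ] ℂ | eLpNorm (f : α → ℂ) ∞ μ < ⊤}
  zero_mem' := by
    simp only [Set.mem_setOf_eq]
    rw [eLpNorm_congr_ae AEEqFun.coeFn_zero, eLpNorm_zero]
    exact ENNReal.zero_lt_top
  add_mem' := by
    intro a b ha hb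
    simp only [Set.mem_setOf_eq] at *
    calc eLpNorm (↑(a + b) : α → ℂ) ∞ μ
        = eLpNorm ((a : α → ℂ) + (b : α → ℂ)) ∞ μ :=
          eLpNorm_congr_ae (AEEqFun.coeFn_add a b)
      _ ≤ eLpNorm (a : α → ℂ) ∞ μ + eLpNorm (b : α → ℂ) ∞ μ :=
          eLpNorm_add_le a.aestronglyMeasurable b.aestronglyMeasurable le_top
      _ < ⊤ := ENNReal.add_lt_top.2 ⟨ha, hb⟩
  neg_mem' := by
    intro a ha
    simp only [Set.mem_setOf_eq] at *
    calc eLpNorm (↑(-a) : α → ℂ) ∞ μ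
        = eLpNorm (-(a : α → ℂ)) ∞ μ := eLpNorm_congr_ae (AEEqFun.coeFn_neg a)
      _ = eLpNorm (a : α → ℂ) ∞ μ := eLpNorm_neg _ _ _
      _ < ⊤ := ha
  one_mem' := by
    simp only [Set.mem_setOf_eq]
    rw [eLpNorm_congr_ae (AEEqFun.coeFn_one (β := ℂ))]
    exact (memLp_top_const (1 : ℂ)).2
  mul_mem' := by
    intro a b ha hb
    simp only [Set.mem_setOf_eq] at *
    calc eLpNorm (↑(a * b) : α → ℂ) ∞ μ
        = eLpNorm (fun x => (a : α → ℂ) x * (b : α → ℂ) x) ∞ μ :=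
          eLpNorm_congr_ae (AEEqFun.coeFn_mul a b)
      _ ≤ eLpNorm (a : α → ℂ) ∞ μ * eLpNorm (b : α → ℂ) ∞ μ :=
          eLpNorm_le_eLpNorm_top_mul_eLpNorm ∞ (a : α → ℂ) b.aestronglyMeasurable
            (· * ·) 1 (Filter.Eventually.of_forall fun x => by simp [nnnorm_mul]) |>.trans_eq
              (by simp)
      _ < ⊤ := ENNReal.mul_lt_top ha hb

/-- Let `(X, μ)` be a measure space and `f₁, …, fₙ : X → ℝ` bounded measurable
functions, `n ≥ 1`.  Let `f = sqrt (f₁² + ⋯ + fₙ²)`.  Then, in the ring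
`L^∞(X, μ; ℂ)`, the ideal generated by the classes `[f₁], …, [fₙ]` equals the
principal ideal generated by `[f]`.  The classes are specified through a.e. equality of
representatives. -/
theorem stmt6 {X : Type*} [MeasurableSpace X] (μ : Measure X) {n : ℕ} (hn : 1 ≤ n)
    (f : Fin n → X → ℝ)
    (hmeas : ∀ i, Measurable (f i)) (hbdd : ∀ i, ∃ C : ℝ, ∀ x, |f i x| ≤ C)
    (F : Fin n → ↥(Linfty μ))
    (hF : ∀ i, ((F i : X →ₘ[μ] ℂ) : X → ℂ) =ᵐ[μ] fun x => ((f i x : ℝ) : ℂ))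
    (Fs : ↥(Linfty μ))
    (hFs : ((Fs : X →ₘ[μ] ℂ) : X → ℂ) =ᵐ[μ]
      fun x => ((Real.sqrt (∑ i, f i x ^ 2) : ℝ) : ℂ)) :
    Ideal.span (Set.range F) = Ideal.span {Fs} := by
  classical
  -- abbreviations
  set S : X → ℝ := fun x => Real.sqrt (∑ i, f i x ^ 2) with hS
  have hSnn : ∀ x, 0 ≤ S x := fun x => Real.sqrt_nonneg _
  have hle : ∀ i x, |f i x| ≤ S x := by
    intro i x
    have h1 : f i x ^ 2 ≤ ∑ j, f j x ^ 2 :=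
      Finset.single_le_sum (fun j _ => sq_nonneg (f j x)) (Finset.mem_univ i)
    calc |f i x| = Real.sqrt (f i x ^ 2) := (Real.sqrt_sq_eq_abs _).symm
      _ ≤ S x := Real.sqrt_le_sqrt h1
  have hSzero : ∀ x, S x = 0 → ∀ i, f i x = 0 := by
    intro x hx i
    have := hle i x
    rw [hx] at this
    exact abs_nonpos_iff.mp this
  set g : Fin n → X → ℝ := fun i x => f i x / S x with hg
  have hgmeas : ∀ i, Measurable (g i) := by
    intro i
    exact (hmeas i).div ((Finset.measurable_sum _ fun j _ => (hmeas j).pow_const 2).sqrt)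
  have hgbd : ∀ i x, |g i x| ≤ 1 := by
    intro i x
    rcases eq_or_lt_of_le (hSnn x) with h | h
    · simp [hg, ← h]
    · rw [hg, abs_div, abs_of_pos h, div_le_one h]
      exact hle i x
  have hgS : ∀ i x, g i x * S x = f i x := by
    intro i x
    rcases eq_or_lt_of_le (hSnn x) with h | h
    · rw [← h, mul_zero, hSzero x h.symm i]
    · exact div_mul_cancel₀ _ (ne_of_gt h)
  have hsum : ∀ x, ∑ i, g i x * f i x = S x := by
    intro x
    rcases eq_or_lt_of_le (hSnn x) with h | h
    · rw [← h]
      refine Finset.sum_eq_zero fun i _ => ?_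
      rw [hSzero x h.symm i, mul_zero]
    · have : ∀ i, g i x * f i x = f i x ^ 2 / S x := by
        intro i; rw [hg]; ring
      have hsq : (∑ i, f i x ^ 2) = S x ^ 2 :=
        (Real.sq_sqrt (Finset.sum_nonneg fun i _ => sq_nonneg (f i x))).symm
      rw [Finset.sum_congr rfl fun i _ => this i, ← Finset.sum_div, hsq, sq,
        mul_div_assoc, div_self (ne_of_gt h), mul_one]
  -- complex-valued versions of g i, as elements of Linfty
  have hGmeas : ∀ i, Measurable (fun x => ((g i x : ℝ) : ℂ)) := fun i =>
    Complex.measurable_ofReal.comp (hgmeas i)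
  have hGmem : ∀ i, (AEEqFun.mk (fun x => ((g i x : ℝ) : ℂ))
      (hGmeas i).aestronglyMeasurable) ∈ Linfty μ := by
    intro i
    show eLpNorm _ ∞ μ < ⊤
    rw [eLpNorm_congr_ae (AEEqFun.coeFn_mk _ _)]
    exact (memLp_top_of_bound (hGmeas i).aestronglyMeasurable 1
      (Filter.Eventually.of_forall fun x => by
        simpa [Complex.norm_real] using hgbd i x)).2
  set G : Fin n → ↥(Linfty μ) := fun i => ⟨_, hGmem i⟩ with hGdef
  have hGcoe : ∀ i, ((G i : X →ₘ[μ] ℂ) : X → ℂ) =ᵐ[μ] fun x => ((g i x : ℝ) : ℂ) :=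
    fun i => AEEqFun.coeFn_mk _ _
  -- identity (1): G i * Fs = F i
  have hmul : ∀ i, G i * Fs = F i := by
    intro i
    apply Subtype.ext
    show (G i : X →ₘ[μ] ℂ) * (Fs : X →ₘ[μ] ℂ) = (F i : X →ₘ[μ] ℂ)
    apply AEEqFun.ext
    filter_upwards [AEEqFun.coeFn_mul (G i : X →ₘ[μ] ℂ) (Fs : X →ₘ[μ] ℂ),
      hGcoe i, hFs, hF i] with x h1 h2 h3 h4
    rw [h1, Pi.mul_apply, h2, h3, h4, ← Complex.ofReal_mul, hgS i x]
  -- identity (2): ∑ G i * F i = Fs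
  have coe_sum : ∀ (s : Finset (Fin n)) (h : Fin n → (X →ₘ[μ] ℂ)),
      ((∑ i ∈ s, h i : X →ₘ[μ] ℂ) : X → ℂ) =ᵐ[μ] fun x => ∑ i ∈ s, (h i : X → ℂ) x := by
    intro s h
    induction s using Finset.induction with
    | empty => simp only [Finset.sum_empty]; exact AEEqFun.coeFn_zero
    | @insert j s hj ih =>
      rw [Finset.sum_insert hj]
      filter_upwards [AEEqFun.coeFn_add (h j) (∑ i ∈ s, h i), ih] with x h1 h2
      rw [h1, Pi.add_apply, h2, Finset.sum_insert hj]
  have hprod : ∀ᵐ x ∂μ, ∀ i,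
      (((G i : X →ₘ[μ] ℂ) * (F i : X →ₘ[μ] ℂ) : X →ₘ[μ] ℂ) : X → ℂ) x
        = ((g i x * f i x : ℝ) : ℂ) := by
    rw [ae_all_iff]
    intro i
    filter_upwards [AEEqFun.coeFn_mul (G i : X →ₘ[μ] ℂ) (F i : X →ₘ[μ] ℂ),
      hGcoe i, hF i] with x h1 h2 h3
    rw [h1, Pi.mul_apply, h2, h3, ← Complex.ofReal_mul]
  have hsumid : (∑ i, G i * F i) = Fs := by
    apply Subtype.ext
    have hc : ((∑ i, G i * F i : ↥(Linfty μ)) : X →ₘ[μ] ℂ)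
        = ∑ i, (G i : X →ₘ[μ] ℂ) * (F i : X →ₘ[μ] ℂ) := by
      push_cast
      rfl
    rw [hc]
    apply AEEqFun.ext
    filter_upwards [coe_sum Finset.univ
      (fun i => (G i : X →ₘ[μ] ℂ) * (F i : X →ₘ[μ] ℂ)), hprod, hFs] with x h1 h2 h3
    rw [h1, h3]
    calc (∑ i, (((G i : X →ₘ[μ] ℂ) * (F i : X →ₘ[μ] ℂ) : X →ₘ[μ] ℂ) : X → ℂ) x)
        = ∑ i, ((g i x * f i x : ℝ) : ℂ) := Finset.sum_congr rfl fun i _ => h2 i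
      _ = (((∑ i, g i x * f i x : ℝ)) : ℂ) := by push_cast; ring
      _ = _ := by rw [hsum x]
  -- conclude
  apply le_antisymm
  · rw [Ideal.span_le]
    rintro _ ⟨i, rfl⟩
    rw [SetLike.mem_coe, Ideal.mem_span_singleton]
    exact ⟨G i, by rw [mul_comm]; exact (hmul i).symm⟩
  · rw [Ideal.span_le, Set.singleton_subset_iff, SetLike.mem_coe, ← hsumid]
    exact Ideal.sum_mem _ fun i _ =>
      Ideal.mul_mem_left _ _ (Ideal.subset_span ⟨i, rfl⟩)
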